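/- Let R be a (not necessarily commutative) ring and let A, B, R₀, S be matrices over R (A square n×n, B square m×m, R₀ of size n×m, S of size m×n) satisfying the shift equivalence equations A^ℓ = R₀S, B^ℓ = SR₀, AR₀ = R₀B, SA = BS for some positive integer ℓ. Then over the polynomial ring R[t], the following block matrix identity holds: [[1-tA, -R₀],[0, 1]] · [[1 + tA + ⋯ + (tA)^(ℓ-1), R₀],[-t^ℓ S, 1-tB]] = [[1, 0],[-t^ℓ S, 1-tB]]. -/
import Mathlib


open Polynomial Matrix


/-- Multiplying on the right by an `X^k`-scaled matrix pulls the scalar out,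
even over a noncommutative base ring, since `X^k` is central in `R[X]`. -/
lemma pse_mul_X_pow_smul {R : Type*} [Ring R] {a b c : Type*} [Fintype b]
    (M : Matrix a b (Polynomial R)) (N : Matrix b c (Polynomial R)) (k : ℕ) :
    M * ((X : Polynomial R) ^ k • N) = (X : Polynomial R) ^ k • (M * N) := by
  refine Matrix.ext fun i j => ?_
  simp only [Matrix.mul_apply, Matrix.smul_apply, smul_eq_mul, Finset.mul_sum]
  apply Finset.sum_congr rfl
  intro x _
  exact (((Polynomial.commute_X (M i x)).pow_left k).symm).left_comm (N x j)

/-- the basic block-matrix identity derived from a lag-ℓ shift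
equivalence over a (not necessarily commutative) ring `R`, viewed over `R[t]`. -/
theorem pse_block_identity (R : Type*) [Ring R] (n m ℓ : ℕ) (hℓ : 0 < ℓ)
    (A : Matrix (Fin n) (Fin n) R) (B : Matrix (Fin m) (Fin m) R)
    (R₀ : Matrix (Fin n) (Fin m) R) (S : Matrix (Fin m) (Fin n) R)
    (h1 : A ^ ℓ = R₀ * S) (h2 : B ^ ℓ = S * R₀)
    (h3 : A * R₀ = R₀ * B) (h4 : S * A = B * S) :
    let tA : Matrix (Fin n) (Fin n) (Polynomial R) :=
      (X : Polynomial R) • A.map Polynomial.C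
    let tB : Matrix (Fin m) (Fin m) (Polynomial R) :=
      (X : Polynomial R) • B.map Polynomial.C
    let R₀' : Matrix (Fin n) (Fin m) (Polynomial R) := R₀.map Polynomial.C
    let S' : Matrix (Fin m) (Fin n) (Polynomial R) := S.map Polynomial.C
    Matrix.fromBlocks (1 - tA) (-R₀') 0 1 *
      Matrix.fromBlocks (∑ i ∈ Finset.range ℓ, tA ^ i) R₀'
        (-((X : Polynomial R) ^ ℓ • S')) (1 - tB) =
    Matrix.fromBlocks 1 0 (-((X : Polynomial R) ^ ℓ • S')) (1 - tB) := by
  intro tA tB R₀' S'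
  have hpow : ∀ k : ℕ, tA ^ k = (X : Polynomial R) ^ k • (A ^ k).map Polynomial.C := by
    intro k
    induction k with
    | zero => simp [tA]
    | succ k ih =>
      rw [pow_succ, ih, Matrix.smul_mul]
      have step : (A ^ k).map Polynomial.C * tA
          = (X : Polynomial R) • (A ^ (k + 1)).map Polynomial.C := by
        show (A ^ k).map Polynomial.C * ((X : Polynomial R) • A.map Polynomial.C) = _
        have h := pse_mul_X_pow_smul ((A ^ k).map (Polynomial.C : R → Polynomial R))
          (A.map Polynomial.C) 1
        rw [pow_one] at h
        rw [h, ← Matrix.map_mul, ← pow_succ]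
      rw [step, smul_smul, ← pow_succ]
  have hTL : (1 - tA) * (∑ i ∈ Finset.range ℓ, tA ^ i)
      + (-R₀') * (-((X : Polynomial R) ^ ℓ • S')) = 1 := by
    have hg : (tA - 1) * (∑ i ∈ Finset.range ℓ, tA ^ i) = tA ^ ℓ - 1 :=
      mul_geom_sum tA ℓ
    have h1' : (1 - tA) * (∑ i ∈ Finset.range ℓ, tA ^ i) = 1 - tA ^ ℓ := by
      rw [← neg_sub tA 1, neg_mul, hg, neg_sub]
    rw [h1', Matrix.neg_mul, Matrix.mul_neg, neg_neg, pse_mul_X_pow_smul, hpow,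
      ← Matrix.map_mul, ← h1]
    abel
  have hTR : (1 - tA) * R₀' + (-R₀') * (1 - tB) = 0 := by
    have e1 : tA * R₀' = (X : Polynomial R) • (A * R₀).map Polynomial.C := by
      show ((X : Polynomial R) • A.map Polynomial.C) * R₀' = _
      rw [Matrix.smul_mul, ← Matrix.map_mul]
    have e2 : R₀' * tB = (X : Polynomial R) • (R₀ * B).map Polynomial.C := by
      show R₀' * ((X : Polynomial R) • B.map Polynomial.C) = _
      have h := pse_mul_X_pow_smul R₀' (B.map (Polynomial.C : R → Polynomial R)) 1
      rw [pow_one] at h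
      rw [h, ← Matrix.map_mul]
    rw [Matrix.sub_mul, Matrix.mul_sub, Matrix.one_mul, Matrix.mul_one, Matrix.neg_mul,
      e1, e2, h3]
    abel
  rw [Matrix.fromBlocks_multiply, hTL, hTR, Matrix.zero_mul, Matrix.zero_mul,
    Matrix.one_mul, Matrix.one_mul, zero_add, zero_add]
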